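/- Let (G, G_•) be a filtered group, let q_0, q_1: {0,1}^n → G, let k ≥ 1, and let ⟨q_0, q_1⟩_k: {0,1}^{n+k} → G be the k-arrow given by (v,w) ↦ q_0(v) if w ≠ 1^k and q_1(v) if w = 1^k. Then ⟨q_0, q_1⟩_k ∈ C^{n+k}(G_•) if and only if q_0 ∈ C^n(G_•) and the pointwise product q_0^{-1} q_1 lies in C^n(G_•^{+k}), where G_•^{+k} is the shifted filtration with i-th term G_{i+k}. -/

import Mathlib

open Finset

/-- Embedding of the discrete cube `{0,1}^n` into `ℤ^n`. -/
def cubeEmb {n : ℕ} (v : Fin n → Bool) : Fin n → ℤ := fun i => if v i then 1 else 0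

/-- A discrete-cube morphism: the restriction to `{0,1}^m` of an affine
homomorphism `ℤ^m → ℤ^n`. -/
def IsCubeMorphism {m n : ℕ} (φ : (Fin m → Bool) → (Fin n → Bool)) : Prop :=
  ∃ (M : (Fin m → ℤ) →+ (Fin n → ℤ)) (t : Fin n → ℤ),
    ∀ v : Fin m → Bool, cubeEmb (φ v) = M (cubeEmb v) + t

/-- A face of `{0,1}^n` of codimension `c`: fix `c` coordinates. -/
def IsFaceOfCodim {n : ℕ} (F : Set (Fin n → Bool)) (c : ℕ) : Prop :=
  ∃ (I : Finset (Fin n)) (x : Fin n → Bool), I.card = c ∧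
    F = {v : Fin n → Bool | ∀ i ∈ I, v i = x i}

/-- An `m`-face map into `{0,1}^n`: an injective cube morphism whose image is
an `m`-dimensional face. -/
def IsFaceMap {m n : ℕ} (φ : (Fin m → Bool) → (Fin n → Bool)) : Prop :=
  IsCubeMorphism φ ∧ Function.Injective φ ∧ IsFaceOfCodim (Set.range φ) (n - m)

/-- The number of coordinates of `v` equal to `1`. -/
def weight {n : ℕ} (v : Fin n → Bool) : ℕ := (Finset.univ.filter fun i => v i = true).card

/-- A (pre)filtration on a group: a decreasing chain of subgroups with
`[G_i, G_j] ⊆ G_{i+j}`. -/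
def IsHKFiltration {G : Type*} [Group G] (Gf : ℕ → Subgroup G) : Prop :=
  (∀ i, Gf (i + 1) ≤ Gf i) ∧
  (∀ i j : ℕ, ∀ x ∈ Gf i, ∀ y ∈ Gf j, x⁻¹ * y⁻¹ * x * y ∈ Gf (i + j))

open Classical in
/-- The face-group element `g^F`: equal to `g` on `F` and to the identity elsewhere. -/
noncomputable def faceEl {G : Type*} [Group G] {n : ℕ} (F : Set (Fin n → Bool)) (g : G) :
    (Fin n → Bool) → G :=
  fun v => if v ∈ F then g else 1

/-- The Host–Kra cube group `C^n(G_•)`: the subgroup of `G^{{0,1}^n}` generated by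
the face groups. -/
noncomputable def hkCubes {G : Type*} [Group G] (Gf : ℕ → Subgroup G) (n : ℕ) :
    Subgroup ((Fin n → Bool) → G) :=
  Subgroup.closure { f | ∃ (c : ℕ) (F : Set (Fin n → Bool)) (g : G),
    IsFaceOfCodim F c ∧ g ∈ Gf c ∧ f = faceEl F g }

/-- Restriction of a map on `{0,1}^{n+1}` to the lower face `{v : v_j = 0}`,
viewed as a map on `{0,1}^n`. -/
def lowerFaceRestr {X : Type*} {n : ℕ} (q : (Fin (n + 1) → Bool) → X) (j : Fin (n + 1)) :
    (Fin n → Bool) → X :=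
  fun v => q (j.insertNth false v)

/-- An `(n+1)`-corner: every restriction to an `n`-face containing `0^{n+1}` is a cube. -/
def IsNSCorner {X : Type*} (C : ∀ n, ((Fin n → Bool) → X) → Prop) (n : ℕ)
    (q' : (Fin (n + 1) → Bool) → X) : Prop :=
  ∀ j : Fin (n + 1), C n (lowerFaceRestr q' j)

/-- `q` is a completion of the corner `q'`. -/
def IsNSCompletion {X : Type*} (C : ∀ n, ((Fin n → Bool) → X) → Prop) (n : ℕ)
    (q' q : (Fin (n + 1) → Bool) → X) : Prop :=
  C (n + 1) q ∧ ∀ v : Fin (n + 1) → Bool, v ≠ (fun _ => true) → q v = q' v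

/-- The nilspace axioms: composition, ergodicity and corner completion. -/
def IsNilspace {X : Type*} (C : ∀ n, ((Fin n → Bool) → X) → Prop) : Prop :=
  (∀ (m n : ℕ) (φ : (Fin m → Bool) → (Fin n → Bool)), IsCubeMorphism φ →
      ∀ q, C n q → C m (q ∘ φ)) ∧
  (∀ q : (Fin 1 → Bool) → X, C 1 q) ∧
  (∀ n (q' : (Fin (n + 1) → Bool) → X), IsNSCorner C n q' → ∃ q, IsNSCompletion C n q' q)

/-- A `k`-step nilspace: a nilspace in which every `(k+1)`-corner has a unique
completion. -/
def IsKStepNilspace {X : Type*} (C : ∀ n, ((Fin n → Bool) → X) → Prop) (k : ℕ) : Prop :=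
  IsNilspace C ∧
  ∀ q' : (Fin (k + 1) → Bool) → X, IsNSCorner C k q' → ∃! q, IsNSCompletion C k q' q

/-- The Gray-code alternating product `σ_n`. -/
def graySigma {G : Type*} [Group G] : (n : ℕ) → ((Fin n → Bool) → G) → G
  | 0, g => g (fun i => i.elim0)
  | n + 1, g => (graySigma n (fun v => g (Fin.snoc v true)))⁻¹ *
      graySigma n (fun v => g (Fin.snoc v false))

/-- The difference operator `∂_h g (x) = g(x)⁻¹ g(xh)`. -/
def mulDiff {H G : Type*} [Group H] [Group G] (h : H) (g : H → G) : H → G :=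
  fun x => (g x)⁻¹ * g (x * h)

/-- `g : H → G` is a polynomial map adapted to the filtrations `H_•, G_•`. -/
def IsPolyMap {H G : Type*} [Group H] [Group G] (Hf : ℕ → Subgroup H)
    (Gf : ℕ → Subgroup G) (g : H → G) : Prop :=
  ∀ (n : ℕ) (d : Fin n → ℕ) (h : Fin n → H), (∀ j, h j ∈ Hf (d j)) →
    ∀ x : H, ((List.ofFn h).foldr mulDiff g) x ∈ Gf (∑ j, d j)

/-- The `k`-arrow `⟨q_0, q_1⟩_k : {0,1}^{n+k} → X`. -/
def arrowMap {X : Type*} {n k : ℕ} (q0 q1 : (Fin n → Bool) → X) :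
    (Fin (n + k) → Bool) → X :=
  fun v =>
    if ∀ j : Fin k, v (Fin.natAdd n j) = true
    then q1 (fun i => v (Fin.castAdd k i))
    else q0 (fun i => v (Fin.castAdd k i))

/-! ### Auxiliary machinery for `stmt12` -/

section Stmt12Aux

variable {G : Type*} [Group G]

lemma antitone_of_filtration {Gf : ℕ → Subgroup G} (h : IsHKFiltration Gf) :
    ∀ {i j : ℕ}, i ≤ j → Gf j ≤ Gf i :=
  fun {i j} hij => antitone_nat_of_succ_le h.1 hij

lemma isFiltration_shift {Gf : ℕ → Subgroup G} (h : IsHKFiltration Gf) (k : ℕ) :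
    IsHKFiltration (fun i => Gf (i + k)) := by
  constructor
  · intro i
    exact antitone_of_filtration h (by omega)
  · intro i j x hx y hy
    exact antitone_of_filtration h (by omega) (h.2 (i + k) (j + k) x hx y hy)

lemma faceEl_comp {n m : ℕ} (σ : (Fin m → Bool) → (Fin n → Bool))
    (F : Set (Fin n → Bool)) (g : G) :
    (faceEl F g) ∘ σ = faceEl (σ ⁻¹' F) g := rfl

lemma faceEl_empty {n : ℕ} (g : G) : faceEl (∅ : Set (Fin n → Bool)) g = 1 := by
  funext v; simp [faceEl]

lemma faceEl_inv {n : ℕ} (F : Set (Fin n → Bool)) (g : G) :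
    (faceEl F g)⁻¹ = faceEl F g⁻¹ := by
  funext v; by_cases h : v ∈ F <;> simp [faceEl, h]

lemma faceEl_mem {Gf : ℕ → Subgroup G} (hGf : IsHKFiltration Gf) {n c c' : ℕ}
    {F : Set (Fin n → Bool)} (hF : IsFaceOfCodim F c') {g : G} (hg : g ∈ Gf c)
    (hcc : c' ≤ c) : faceEl F g ∈ hkCubes Gf n :=
  Subgroup.subset_closure ⟨c', F, g, hF, antitone_of_filtration hGf hcc hg, rfl⟩

lemma hom_mem_of_gen {G' H : Type*} [Group G'] [Group H] (φ : G' →* H) {S : Set G'}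
    {K : Subgroup H} (hS : ∀ s ∈ S, φ s ∈ K) {x : G'} (hx : x ∈ Subgroup.closure S) :
    φ x ∈ K := by
  induction hx using Subgroup.closure_induction with
  | mem s hs => exact hS s hs
  | one => rw [map_one]; exact one_mem K
  | mul x y _ _ hx hy => rw [map_mul]; exact mul_mem hx hy
  | inv x _ hx => rw [map_inv]; exact inv_mem hx

def compHom {A B : Type*} (σ : A → B) : (B → G) →* (A → G) where
  toFun f := f ∘ σ
  map_one' := rfl
  map_mul' _ _ := rfl

def sumMap {a b : ℕ} (f : Fin b → Fin a ⊕ Bool) : (Fin a → Bool) → (Fin b → Bool) :=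
  fun v i => Sum.elim v id (f i)

lemma pre_face_empty {a b : ℕ} (f : Fin b → Fin a ⊕ Bool) {I : Finset (Fin b)}
    {x : Fin b → Bool} {i : Fin b} (hi : i ∈ I) {bb : Bool} (hfi : f i = Sum.inr bb)
    (hbb : bb ≠ x i) :
    sumMap f ⁻¹' {w | ∀ i ∈ I, w i = x i} = ∅ := by
  ext v
  simp only [Set.mem_preimage, Set.mem_setOf_eq, Set.mem_empty_iff_false, iff_false,
    not_forall]
  exact ⟨i, hi, fun hv => hbb (by simpa [sumMap, hfi] using hv)⟩

open Classical in
lemma pre_face_codim {a b : ℕ} (f : Fin b → Fin a ⊕ Bool)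
    (hinj : ∀ i₁ i₂ j, f i₁ = Sum.inl j → f i₂ = Sum.inl j → i₁ = i₂)
    (I : Finset (Fin b)) (x : Fin b → Bool)
    (hnc : ∀ i ∈ I, ∀ bb, f i = Sum.inr bb → bb = x i) :
    IsFaceOfCodim (sumMap f ⁻¹' {w | ∀ i ∈ I, w i = x i})
      ((I.filter (fun i => (f i).isLeft)).card) := by
  refine ⟨Finset.univ.filter (fun j : Fin a => ∃ i ∈ I, f i = Sum.inl j),
    fun j => if h : ∃ i ∈ I, f i = Sum.inl j then x h.choose else false, ?_, ?_⟩
  · refine (Finset.card_bij (fun i hi => (f i).getLeft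
        (by simpa using (Finset.mem_filter.mp hi).2)) ?_ ?_ ?_).symm
    · intro i hi
      simp only [Finset.mem_filter, Finset.mem_univ, true_and]
      exact ⟨i, (Finset.mem_filter.mp hi).1, (Sum.inl_getLeft _ _).symm⟩
    · intro i₁ h₁ i₂ h₂ he
      have hL₁ : (f i₁).isLeft = true := by simpa using (Finset.mem_filter.mp h₁).2
      have hL₂ : (f i₂).isLeft = true := by simpa using (Finset.mem_filter.mp h₂).2
      have he' : (f i₁).getLeft hL₁ = (f i₂).getLeft hL₂ := he
      exact hinj i₁ i₂ _ (Sum.inl_getLeft _ hL₁).symm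
        (by rw [he']; exact (Sum.inl_getLeft _ hL₂).symm)
    · intro j hj
      obtain ⟨i, hiI, hfi⟩ : ∃ i ∈ I, f i = Sum.inl j := by
        simpa using hj
      have hL : (f i).isLeft = true := by simp [hfi]
      refine ⟨i, Finset.mem_filter.mpr ⟨hiI, hL⟩, ?_⟩
      show (f i).getLeft _ = j
      apply Sum.inl_injective
      rw [Sum.inl_getLeft, hfi]
  · ext v
    simp only [Set.mem_preimage, Set.mem_setOf_eq, Finset.mem_filter, Finset.mem_univ,
      true_and]
    constructor
    · intro hv j hj
      rw [dif_pos hj]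
      obtain ⟨hiI, hfi⟩ := hj.choose_spec
      have := hv _ hiI
      simpa [sumMap, hfi] using this
    · intro hv i hiI
      cases hfi : f i with
      | inl j =>
        have hj : ∃ i ∈ I, f i = Sum.inl j := ⟨i, hiI, hfi⟩
        have hvj := hv j hj
        rw [dif_pos hj] at hvj
        have hieq : hj.choose = i := hinj _ _ j hj.choose_spec.2 hfi
        rw [hieq] at hvj
        simpa [sumMap, hfi] using hvj
      | inr bb =>
        have := hnc i hiI bb hfi
        simpa [sumMap, hfi] using this

lemma comp_mem {Gf : ℕ → Subgroup G} (hGf : IsHKFiltration Gf) {a b : ℕ}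
    (f : Fin b → Fin a ⊕ Bool)
    (hinj : ∀ i₁ i₂ j, f i₁ = Sum.inl j → f i₂ = Sum.inl j → i₁ = i₂)
    {q : (Fin b → Bool) → G} (hq : q ∈ hkCubes Gf b) :
    q ∘ sumMap f ∈ hkCubes Gf a := by
  refine hom_mem_of_gen (compHom (sumMap f)) ?_ hq
  rintro s ⟨c, F, g, hF, hg, rfl⟩
  obtain ⟨I, x, hcard, rfl⟩ := hF
  show faceEl _ g ∘ sumMap f ∈ _
  rw [faceEl_comp]
  by_cases hcon : ∃ i ∈ I, ∃ bb, f i = Sum.inr bb ∧ bb ≠ x i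
  · obtain ⟨i, hi, bb, hfi, hbb⟩ := hcon
    rw [pre_face_empty f hi hfi hbb, faceEl_empty]
    exact one_mem _
  · push_neg at hcon
    exact faceEl_mem hGf (pre_face_codim f hinj I x hcon) hg
      (le_trans (Finset.card_filter_le _ _) hcard.le)

lemma face_inter {m : ℕ} {F₁ F₂ : Set (Fin m → Bool)} {c₁ c₂ : ℕ}
    (h₁ : IsFaceOfCodim F₁ c₁) (h₂ : IsFaceOfCodim F₂ c₂) :
    F₁ ∩ F₂ = ∅ ∨ ∃ c ≤ c₁ + c₂, IsFaceOfCodim (F₁ ∩ F₂) c := by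
  classical
  obtain ⟨I₁, x₁, hc₁, rfl⟩ := h₁
  obtain ⟨I₂, x₂, hc₂, rfl⟩ := h₂
  by_cases hcon : ∃ i ∈ I₁, i ∈ I₂ ∧ x₁ i ≠ x₂ i
  · left
    obtain ⟨i, h1, h2, hne⟩ := hcon
    ext v
    simp only [Set.mem_inter_iff, Set.mem_setOf_eq, Set.mem_empty_iff_false, iff_false,
      not_and]
    intro hv1 hv2
    exact hne ((hv1 i h1).symm.trans (hv2 i h2))
  · right
    push_neg at hcon
    refine ⟨(I₁ ∪ I₂).card, ?_, I₁ ∪ I₂, fun i => if i ∈ I₁ then x₁ i else x₂ i, rfl, ?_⟩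
    · calc (I₁ ∪ I₂).card ≤ I₁.card + I₂.card := Finset.card_union_le _ _
        _ = c₁ + c₂ := by rw [hc₁, hc₂]
    · ext v
      simp only [Set.mem_inter_iff, Set.mem_setOf_eq, Finset.mem_union]
      constructor
      · rintro ⟨hv1, hv2⟩ i hi
        by_cases h : i ∈ I₁
        · rw [if_pos h]; exact hv1 i h
        · rw [if_neg h]; exact hv2 i (hi.resolve_left h)
      · intro hv
        constructor
        · intro i hi
          have := hv i (Or.inl hi)
          rwa [if_pos hi] at this
        · intro i hi
          by_cases h : i ∈ I₁
          · have := hv i (Or.inl h)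
            rw [if_pos h] at this
            rw [this]
            exact hcon i h hi
          · have := hv i (Or.inr hi)
            rwa [if_neg h] at this

lemma conj_face_mem {Gf : ℕ → Subgroup G} (hGf : IsHKFiltration Gf) {n k c c' : ℕ}
    {F F' : Set (Fin n → Bool)} (hF : IsFaceOfCodim F c) (hF' : IsFaceOfCodim F' c')
    {g h : G} (hg : g ∈ Gf c) (hh : h ∈ Gf (c' + k)) :
    (faceEl F g)⁻¹ * faceEl F' h * faceEl F g ∈ hkCubes (fun i => Gf (i + k)) n := by
  have heq : (faceEl F g)⁻¹ * faceEl F' h * faceEl F g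
      = faceEl F' h * faceEl (F' ∩ F) (h⁻¹ * (g⁻¹ * h * g)) := by
    funext v
    by_cases hvF : v ∈ F <;> by_cases hvF' : v ∈ F' <;>
      simp [faceEl, hvF, hvF', Set.mem_inter_iff, Pi.mul_apply, Pi.inv_apply] <;> group
  rw [heq]
  refine mul_mem (faceEl_mem (isFiltration_shift hGf k) hF' (show h ∈ Gf (c' + k) from hh)
    le_rfl) ?_
  rcases face_inter hF' hF with he | ⟨m, hm, hface⟩
  · rw [he, faceEl_empty]; exact one_mem _
  · have hw : h⁻¹ * (g⁻¹ * h * g) ∈ Gf (c' + c + k) := by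
      have hcomm := hGf.2 (c' + k) c h hh g hg
      have : c' + k + c = c' + c + k := by omega
      rw [this] at hcomm
      have harr : h⁻¹ * (g⁻¹ * h * g) = h⁻¹ * g⁻¹ * h * g := by group
      rwa [harr]
    exact faceEl_mem (isFiltration_shift hGf k) hface
      (show h⁻¹ * (g⁻¹ * h * g) ∈ Gf (c' + c + k) from hw) (by omega)

lemma conj_face_all {Gf : ℕ → Subgroup G} (hGf : IsHKFiltration Gf) {n k c : ℕ}
    {F : Set (Fin n → Bool)} (hF : IsFaceOfCodim F c) {g : G} (hg : g ∈ Gf c)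
    {d : (Fin n → Bool) → G} (hd : d ∈ hkCubes (fun i => Gf (i + k)) n) :
    (faceEl F g)⁻¹ * d * faceEl F g ∈ hkCubes (fun i => Gf (i + k)) n := by
  induction hd using Subgroup.closure_induction with
  | mem s hs =>
    obtain ⟨c', F', h, hF', hh, rfl⟩ := hs
    exact conj_face_mem hGf hF hF' hg hh
  | one => simpa using one_mem _
  | mul x y _ _ ihx ihy =>
    have heq : (faceEl F g)⁻¹ * (x * y) * faceEl F g
        = ((faceEl F g)⁻¹ * x * faceEl F g) * ((faceEl F g)⁻¹ * y * faceEl F g) := by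
      group
    rw [heq]
    exact mul_mem ihx ihy
  | inv x _ ihx =>
    have heq : (faceEl F g)⁻¹ * x⁻¹ * faceEl F g
        = ((faceEl F g)⁻¹ * x * faceEl F g)⁻¹ := by group
    rw [heq]
    exact inv_mem ihx

lemma conj_mem {Gf : ℕ → Subgroup G} (hGf : IsHKFiltration Gf) {n k : ℕ}
    {a : (Fin n → Bool) → G} (ha : a ∈ hkCubes Gf n)
    (d : (Fin n → Bool) → G) (hd : d ∈ hkCubes (fun i => Gf (i + k)) n) :
    a⁻¹ * d * a ∈ hkCubes (fun i => Gf (i + k)) n := by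
  have main : ∀ a', a' ∈ hkCubes Gf n → ∀ d', d' ∈ hkCubes (fun i => Gf (i + k)) n →
      a'⁻¹ * d' * a' ∈ hkCubes (fun i => Gf (i + k)) n ∧
      a' * d' * a'⁻¹ ∈ hkCubes (fun i => Gf (i + k)) n := by
    intro a' ha'
    induction ha' using Subgroup.closure_induction with
    | mem s hs =>
      obtain ⟨c, F, g, hF, hg, rfl⟩ := hs
      intro d' hd'
      constructor
      · exact conj_face_all hGf hF hg hd'
      · have := conj_face_all hGf hF (inv_mem hg) hd'
        rwa [← faceEl_inv, inv_inv] at this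
    | one => intro d' hd'; simpa using hd'
    | mul x y _ _ ihx ihy =>
      intro d' hd'
      constructor
      · have h1 := (ihx d' hd').1
        have h2 := (ihy _ h1).1
        have heq : (x * y)⁻¹ * d' * (x * y) = y⁻¹ * (x⁻¹ * d' * x) * y := by group
        rwa [heq]
      · have h1 := (ihy d' hd').2
        have h2 := (ihx _ h1).2
        have heq : (x * y) * d' * (x * y)⁻¹ = x * (y * d' * y⁻¹) * x⁻¹ := by group
        rwa [heq]
    | inv x _ ihx =>
      intro d' hd'
      constructor
      · have := (ihx d' hd').2
        have heq : (x⁻¹)⁻¹ * d' * x⁻¹ = x * d' * x⁻¹ := by group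
        rwa [heq]
      · have := (ihx d' hd').1
        have heq : x⁻¹ * d' * (x⁻¹)⁻¹ = x⁻¹ * d' * x := by group
        rwa [heq]
  exact (main a ha d hd).1

variable (G) in
def topHom (n k : ℕ) : ((Fin n → Bool) → G) →* ((Fin (n + k) → Bool) → G) where
  toFun f := fun v => if ∀ j : Fin k, v (Fin.natAdd n j) = true
    then f (fun i => v (Fin.castAdd k i)) else 1
  map_one' := by
    funext v
    by_cases h : ∀ j : Fin k, v (Fin.natAdd n j) = true <;> simp [h]
  map_mul' f g := by
    funext v
    by_cases h : ∀ j : Fin k, v (Fin.natAdd n j) = true <;> simp [h]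

def resf (n k : ℕ) : Fin n → Fin (n + k) ⊕ Bool := fun i => Sum.inl (Fin.castAdd k i)

lemma resf_inj (n k : ℕ) : ∀ i₁ i₂ j, resf n k i₁ = Sum.inl j → resf n k i₂ = Sum.inl j →
    i₁ = i₂ := by
  intro i₁ i₂ j h1 h2
  simp only [resf, Sum.inl.injEq] at h1 h2
  have := congrArg Fin.val (h1.trans h2.symm)
  simp only [Fin.coe_castAdd] at this
  exact Fin.ext this

lemma top_face (n k : ℕ) :
    IsFaceOfCodim {v : Fin (n + k) → Bool | ∀ j : Fin k, v (Fin.natAdd n j) = true} k := by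
  refine ⟨Finset.univ.map ⟨Fin.natAdd n, fun a b h => Fin.ext ?_⟩, fun _ => true, ?_, ?_⟩
  · have := congrArg Fin.val h
    simp only [Fin.coe_natAdd] at this
    omega
  · simp
  · ext v
    simp [Finset.mem_map]
    exact Iff.rfl

lemma topHom_faceEl {n k : ℕ} (F : Set (Fin n → Bool)) (g : G) :
    topHom G n k (faceEl F g)
      = faceEl ({v : Fin (n + k) → Bool | ∀ j : Fin k, v (Fin.natAdd n j) = true}
          ∩ sumMap (resf n k) ⁻¹' F) g := by
  funext v
  show (if ∀ j : Fin k, v (Fin.natAdd n j) = true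
    then faceEl F g (fun i => v (Fin.castAdd k i)) else 1) = _
  by_cases h1 : ∀ j : Fin k, v (Fin.natAdd n j) = true
  · rw [if_pos h1]
    show faceEl F g _ = _
    by_cases h2 : (fun i => v (Fin.castAdd k i)) ∈ F
    · have hmem : v ∈ {v : Fin (n + k) → Bool | ∀ j : Fin k, v (Fin.natAdd n j) = true} := h1
      rw [faceEl, if_pos h2, faceEl, if_pos (Set.mem_inter hmem h2)]
    · rw [faceEl, if_neg h2, faceEl, if_neg (fun hc => h2 hc.2)]
  · rw [if_neg h1, faceEl, if_neg (fun hc => h1 hc.1)]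

lemma topHom_mem {Gf : ℕ → Subgroup G} (hGf : IsHKFiltration Gf) {n k : ℕ}
    {d : (Fin n → Bool) → G} (hd : d ∈ hkCubes (fun i => Gf (i + k)) n) :
    topHom G n k d ∈ hkCubes Gf (n + k) := by
  refine hom_mem_of_gen _ ?_ hd
  rintro s ⟨c, F, g, hF, hg, rfl⟩
  rw [topHom_faceEl]
  obtain ⟨I, x, hcard, rfl⟩ := hF
  have hpre : IsFaceOfCodim (sumMap (resf n k) ⁻¹' {w | ∀ i ∈ I, w i = x i}) c := by
    have := pre_face_codim (resf n k) (resf_inj n k) I x (by intro i _ bb h; simp [resf] at h)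
    rwa [Finset.filter_true_of_mem (fun i _ => by simp [resf]), hcard] at this
  rcases face_inter (top_face n k) hpre with he | ⟨m, hm, hface⟩
  · rw [he, faceEl_empty]; exact one_mem _
  · exact faceEl_mem hGf hface (show g ∈ Gf (c + k) from hg) (by omega)

def padf (n k : ℕ) (b : Bool) : Fin (n + k) → Fin n ⊕ Bool :=
  fun i => if h : (i : ℕ) < n then Sum.inl ⟨i, h⟩ else Sum.inr b

lemma padf_inj (n k : ℕ) (b : Bool) : ∀ i₁ i₂ j, padf n k b i₁ = Sum.inl j →
    padf n k b i₂ = Sum.inl j → i₁ = i₂ := by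
  intro i₁ i₂ j h1 h2
  simp only [padf] at h1 h2
  split_ifs at h1 h2 with ha hb
  · apply Fin.ext
    have e1 := congrArg Fin.val (Sum.inl.inj h1)
    have e2 := congrArg Fin.val (Sum.inl.inj h2)
    simp only at e1 e2
    omega

lemma arrow_pad_false {n k : ℕ} (hk : 1 ≤ k) (q0 q1 : (Fin n → Bool) → G) :
    arrowMap (k := k) q0 q1 ∘ sumMap (padf n k false) = q0 := by
  funext v
  have hcond : ¬ ∀ j : Fin k, sumMap (padf n k false) v (Fin.natAdd n j) = true := by
    intro hall
    have h0 := hall ⟨0, hk⟩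
    have hval : ((Fin.natAdd n (⟨0, hk⟩ : Fin k) : Fin (n + k)) : ℕ) = n + 0 := rfl
    have hnot : ¬ ((Fin.natAdd n (⟨0, hk⟩ : Fin k) : Fin (n + k)) : ℕ) < n := by omega
    rw [sumMap, padf] at h0
    simp only [dif_neg hnot] at h0
    simp at h0
  simp only [Function.comp_apply, arrowMap, if_neg hcond]
  congr 1
  funext i
  have hlt : ((Fin.castAdd k i : Fin (n + k)) : ℕ) < n := by
    simp only [Fin.coe_castAdd]; exact i.isLt
  rw [sumMap, padf]
  simp only [dif_pos hlt, Sum.elim_inl]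
  exact congrArg v (Fin.ext (by simp))

lemma arrow_pad_true {n k : ℕ} (q0 q1 : (Fin n → Bool) → G) :
    arrowMap (k := k) q0 q1 ∘ sumMap (padf n k true) = q1 := by
  funext v
  have hcond : ∀ j : Fin k, sumMap (padf n k true) v (Fin.natAdd n j) = true := by
    intro j
    have hnot : ¬ ((Fin.natAdd n j : Fin (n + k)) : ℕ) < n := by
      simp only [Fin.coe_natAdd]; omega
    rw [sumMap, padf]
    simp only [dif_neg hnot, Sum.elim_inr, id]
  simp only [Function.comp_apply, arrowMap, if_pos hcond]
  congr 1
  funext i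
  have hlt : ((Fin.castAdd k i : Fin (n + k)) : ℕ) < n := by
    simp only [Fin.coe_castAdd]; exact i.isLt
  rw [sumMap, padf]
  simp only [dif_pos hlt, Sum.elim_inl]
  exact congrArg v (Fin.ext (by simp))

lemma arrow_decomp {n k : ℕ} (q0 q1 : (Fin n → Bool) → G) :
    arrowMap (k := k) q0 q1
      = (q0 ∘ sumMap (resf n k)) * topHom G n k (fun v => (q0 v)⁻¹ * q1 v) := by
  funext v
  have hres : sumMap (resf n k) v = fun i => v (Fin.castAdd k i) := rfl
  by_cases h : ∀ j : Fin k, v (Fin.natAdd n j) = true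
  · show _ = (q0 (sumMap (resf n k) v)) * (if _ then _ else _)
    rw [arrowMap, if_pos h, if_pos h, hres]
    group
  · show _ = (q0 (sumMap (resf n k) v)) * (if _ then _ else _)
    rw [arrowMap, if_neg h, if_neg h, hres]
    group

lemma k1_forward {Gf : ℕ → Subgroup G} (hGf : IsHKFiltration Gf) {n : ℕ}
    (q0 q1 : (Fin n → Bool) → G)
    (h : arrowMap (k := 1) q0 q1 ∈ hkCubes Gf (n + 1)) :
    q0 ∈ hkCubes Gf n ∧ q0⁻¹ * q1 ∈ hkCubes (fun i => Gf (i + 1)) n := by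
  classical
  have hmemS : ∀ f ∈ hkCubes Gf (n + 1),
      f ∘ sumMap (padf n 1 false) ∈ hkCubes Gf n ∧
      (f ∘ sumMap (padf n 1 false))⁻¹ * (f ∘ sumMap (padf n 1 true))
        ∈ hkCubes (fun i => Gf (i + 1)) n := by
    intro f hf
    induction hf using Subgroup.closure_induction with
    | one =>
      constructor
      · exact one_mem _
      · simpa using one_mem _
    | mul x y _ _ ihx ihy =>
      obtain ⟨hx0, hxd⟩ := ihx
      obtain ⟨hy0, hyd⟩ := ihy
      have hc0 : ∀ b, (x * y) ∘ sumMap (padf n 1 b)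
          = (x ∘ sumMap (padf n 1 b)) * (y ∘ sumMap (padf n 1 b)) := fun _ => rfl
      constructor
      · rw [hc0]; exact mul_mem hx0 hy0
      · rw [hc0, hc0]
        have heq : ((x ∘ sumMap (padf n 1 false)) * (y ∘ sumMap (padf n 1 false)))⁻¹
              * ((x ∘ sumMap (padf n 1 true)) * (y ∘ sumMap (padf n 1 true)))
            = ((y ∘ sumMap (padf n 1 false))⁻¹
                * ((x ∘ sumMap (padf n 1 false))⁻¹ * (x ∘ sumMap (padf n 1 true)))
                * (y ∘ sumMap (padf n 1 false)))
              * ((y ∘ sumMap (padf n 1 false))⁻¹ * (y ∘ sumMap (padf n 1 true))) := by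
          group
        rw [heq]
        exact mul_mem (conj_mem hGf hy0 _ hxd) hyd
    | inv x _ ihx =>
      obtain ⟨hx0, hxd⟩ := ihx
      have hc0 : ∀ b, x⁻¹ ∘ sumMap (padf n 1 b) = (x ∘ sumMap (padf n 1 b))⁻¹ :=
        fun _ => rfl
      constructor
      · rw [hc0]; exact inv_mem hx0
      · rw [hc0, hc0]
        have heq : ((x ∘ sumMap (padf n 1 false))⁻¹)⁻¹ * (x ∘ sumMap (padf n 1 true))⁻¹
            = ((x ∘ sumMap (padf n 1 false))⁻¹)⁻¹
                * ((x ∘ sumMap (padf n 1 false))⁻¹ * (x ∘ sumMap (padf n 1 true)))⁻¹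
                * (x ∘ sumMap (padf n 1 false))⁻¹ := by group
        rw [heq]
        exact conj_mem hGf (inv_mem hx0) _ (inv_mem hxd)
    | mem s hs =>
      obtain ⟨c, F, g, hF, hg, rfl⟩ := hs
      obtain ⟨I, x, hcard, rfl⟩ := hF
      have hrb : ∀ (b : Bool) (g' : G), faceEl {w | ∀ i ∈ I, w i = x i} g' ∘ sumMap (padf n 1 b)
          = faceEl (sumMap (padf n 1 b) ⁻¹' {w | ∀ i ∈ I, w i = x i}) g' :=
        fun b g' => faceEl_comp _ _ _
      by_cases hlast : Fin.last n ∈ I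
      · have hc1 : 1 ≤ c := hcard ▸ Finset.card_pos.mpr ⟨_, hlast⟩
        have hpadlast : ∀ b : Bool, padf n 1 b (Fin.last n) = Sum.inr b := by
          intro b
          have : ¬ ((Fin.last n : Fin (n + 1)) : ℕ) < n := by simp
          simp [padf, this]
        have hfc : ∀ b : Bool, (I.filter fun i => (padf n 1 b i).isLeft).card = c - 1 := by
          intro b
          have hfilter : (I.filter fun i => (padf n 1 b i).isLeft) = I.erase (Fin.last n) := by
            ext i
            simp only [Finset.mem_filter, Finset.mem_erase]
            constructor
            · rintro ⟨hiI, hL⟩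
              refine ⟨fun he => ?_, hiI⟩
              rw [he, hpadlast] at hL
              simp at hL
            · rintro ⟨hne, hiI⟩
              have hv : (i : ℕ) < n := by
                have h1 := i.isLt
                have h2 : (i : ℕ) ≠ n := fun he => hne (Fin.ext (by simp [he]))
                omega
              refine ⟨hiI, ?_⟩
              simp [padf, hv]
          rw [hfilter, Finset.card_erase_of_mem hlast, hcard]
        have hnc : ∀ b : Bool, b = x (Fin.last n) →
            ∀ i ∈ I, ∀ bb, padf n 1 b i = Sum.inr bb → bb = x i := by
          intro b hbx i hiI bb hfi
          by_cases hv : (i : ℕ) < n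
          · simp [padf, hv] at hfi
          · have hile := i.isLt
            have hieq : i = Fin.last n := Fin.ext (by simp only [Fin.val_last]; omega)
            subst hieq
            rw [hpadlast] at hfi
            rw [← Sum.inr.inj hfi, ← hbx]
        cases hx : x (Fin.last n) with
        | true =>
          have hempty : sumMap (padf n 1 false) ⁻¹' {w | ∀ i ∈ I, w i = x i} = ∅ :=
            pre_face_empty _ hlast (hpadlast false) (by simp [hx])
          have hface := pre_face_codim (padf n 1 true) (padf_inj n 1 true) I x
            (hnc true hx.symm)
          rw [hfc true] at hface
          constructor
          · rw [hrb, hempty, faceEl_empty]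
            exact one_mem _
          · rw [hrb, hrb, hempty, faceEl_empty, inv_one, one_mul]
            have hg' : g ∈ Gf (c - 1 + 1) := by rwa [Nat.sub_add_cancel hc1]
            exact faceEl_mem (isFiltration_shift hGf 1) hface hg' le_rfl
        | false =>
          have hempty : sumMap (padf n 1 true) ⁻¹' {w | ∀ i ∈ I, w i = x i} = ∅ :=
            pre_face_empty _ hlast (hpadlast true) (by simp [hx])
          have hface := pre_face_codim (padf n 1 false) (padf_inj n 1 false) I x
            (hnc false hx.symm)
          rw [hfc false] at hface
          constructor
          · rw [hrb]
            exact faceEl_mem hGf hface hg (by omega)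
          · rw [hrb, hrb, hempty, faceEl_empty, mul_one, faceEl_inv]
            have hg' : g⁻¹ ∈ Gf (c - 1 + 1) := by
              rw [Nat.sub_add_cancel hc1]; exact inv_mem hg
            exact faceEl_mem (isFiltration_shift hGf 1) hface hg' le_rfl
      · have hlt : ∀ i ∈ I, (i : ℕ) < n := by
          intro i hiI
          have h1 := i.isLt
          have h2 : (i : ℕ) ≠ n := by
            intro he
            exact hlast (by rwa [show i = Fin.last n from Fin.ext (by simp [he])] at hiI)
          omega
        have hnc' : ∀ b : Bool, ∀ i ∈ I, ∀ bb, padf n 1 b i = Sum.inr bb → bb = x i := by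
          intro b i hiI bb hfi
          simp [padf, hlt i hiI] at hfi
        have hset : sumMap (padf n 1 false) ⁻¹' {w | ∀ i ∈ I, w i = x i}
            = sumMap (padf n 1 true) ⁻¹' {w | ∀ i ∈ I, w i = x i} := by
          ext v
          simp only [Set.mem_preimage, Set.mem_setOf_eq]
          refine forall₂_congr fun i hiI => ?_
          rw [show sumMap (padf n 1 false) v i = sumMap (padf n 1 true) v i from by
            simp [sumMap, padf, hlt i hiI]]
        have hface := pre_face_codim (padf n 1 false) (padf_inj n 1 false) I x (hnc' false)
        constructor
        · rw [hrb]
          exact faceEl_mem hGf hface hg (hcard ▸ Finset.card_filter_le _ _)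
        · rw [hrb, hrb, ← hset, inv_mul_cancel]
          exact one_mem _
  obtain ⟨ha, hb⟩ := hmemS _ h
  have h0 : arrowMap (k := 1) q0 q1 ∘ sumMap (padf n 1 false) = q0 :=
    arrow_pad_false le_rfl q0 q1
  have h1 : arrowMap (k := 1) q0 q1 ∘ sumMap (padf n 1 true) = q1 :=
    arrow_pad_true q0 q1
  rw [h0] at ha
  rw [h0, h1] at hb
  exact ⟨ha, hb⟩

lemma topHom_zero {n : ℕ} (d : (Fin n → Bool) → G) : topHom G n 0 d = d := by
  funext v
  show (if ∀ j : Fin 0, v (Fin.natAdd n j) = true then d (fun i => v (Fin.castAdd 0 i))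
    else 1) = d v
  rw [if_pos (fun j => j.elim0)]
  congr 1

lemma topHom_succ {n k : ℕ} (d : (Fin n → Bool) → G) :
    topHom G n (k + 1) d = arrowMap (n := n + k) (k := 1) 1 (topHom G n k d) := by
  funext v
  have hvv : ∀ (i i' : Fin (n + (k + 1))), (i : ℕ) = (i' : ℕ) → v i = v i' :=
    fun i i' hii => congrArg v (Fin.ext hii)
  have hiff : (∀ j : Fin (k + 1), v (Fin.natAdd n j) = true)
      ↔ ((∀ j : Fin 1, v (Fin.natAdd (n + k) j) = true)
          ∧ ∀ j : Fin k, v (Fin.castAdd 1 (Fin.natAdd n j)) = true) := by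
    constructor
    · intro hall
      constructor
      · intro j
        rw [hvv (Fin.natAdd (n + k) j) (Fin.natAdd n (Fin.last k)) (by
          have := j.isLt
          simp only [Fin.coe_natAdd, Fin.val_last]
          omega)]
        exact hall _
      · intro j
        rw [hvv (Fin.castAdd 1 (Fin.natAdd n j)) (Fin.natAdd n (Fin.castSucc j)) (by
          simp)]
        exact hall _
    · rintro ⟨h1, h2⟩ j
      by_cases hj : (j : ℕ) < k
      · rw [hvv (Fin.natAdd n j) (Fin.castAdd 1 (Fin.natAdd n ⟨j, hj⟩)) (by simp)]
        exact h2 _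
      · have hjk : (j : ℕ) = k := by have := j.isLt; omega
        rw [hvv (Fin.natAdd n j) (Fin.natAdd (n + k) (0 : Fin 1)) (by
          simp only [Fin.coe_natAdd, hjk]
          omega)]
        exact h1 _
  have harg : (fun i => v (Fin.castAdd (k + 1) i))
      = fun i : Fin n => v (Fin.castAdd 1 (Fin.castAdd k i)) := by
    funext i
    exact hvv _ _ (by simp)
  show (if ∀ j : Fin (k + 1), v (Fin.natAdd n j) = true
      then d (fun i => v (Fin.castAdd (k + 1) i)) else 1)
    = (if ∀ j : Fin 1, v (Fin.natAdd (n + k) j) = true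
      then topHom G n k d (fun i => v (Fin.castAdd 1 i)) else
        (1 : (Fin (n + k) → Bool) → G) (fun i => v (Fin.castAdd 1 i)))
  have htop : topHom G n k d (fun i => v (Fin.castAdd 1 i))
      = if (∀ j : Fin k, v (Fin.castAdd 1 (Fin.natAdd n j)) = true)
        then d (fun i : Fin n => v (Fin.castAdd 1 (Fin.castAdd k i))) else 1 := rfl
  by_cases h1 : ∀ j : Fin 1, v (Fin.natAdd (n + k) j) = true
  · rw [if_pos h1, htop]
    by_cases h2 : ∀ j : Fin k, v (Fin.castAdd 1 (Fin.natAdd n j)) = true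
    · rw [if_pos h2, if_pos (hiff.mpr ⟨h1, h2⟩), harg]
    · rw [if_neg h2, if_neg (fun hc => h2 (hiff.mp hc).2)]
  · rw [if_neg (fun hc => h1 (hiff.mp hc).1), if_neg h1]
    rfl

lemma claim_ind : ∀ (k : ℕ) (Gf : ℕ → Subgroup G), IsHKFiltration Gf → ∀ (n : ℕ)
    (d : (Fin n → Bool) → G), topHom G n k d ∈ hkCubes Gf (n + k) →
    d ∈ hkCubes (fun i => Gf (i + k)) n := by
  intro k
  induction k with
  | zero =>
    intro Gf hGf n d h
    rw [topHom_zero] at h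
    exact h
  | succ k' ih =>
    intro Gf hGf n d h
    rw [topHom_succ] at h
    have h2 := (k1_forward hGf 1 (topHom G n k' d) h).2
    rw [inv_one, one_mul] at h2
    exact ih (fun i => Gf (i + 1)) (isFiltration_shift hGf 1) n d h2

end Stmt12Aux

theorem stmt12 {G : Type*} [Group G] (Gf : ℕ → Subgroup G) (hGf : IsHKFiltration Gf)
    {n k : ℕ} (hk : 1 ≤ k) (q0 q1 : (Fin n → Bool) → G) :
    arrowMap (k := k) q0 q1 ∈ hkCubes Gf (n + k) ↔
      q0 ∈ hkCubes Gf n ∧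
      (fun v => (q0 v)⁻¹ * q1 v) ∈ hkCubes (fun i => Gf (i + k)) n := by
  constructor
  · intro h
    have hq0 : q0 ∈ hkCubes Gf n := by
      have hc := comp_mem hGf (padf n k false) (padf_inj n k false) h
      rwa [arrow_pad_false hk] at hc
    refine ⟨hq0, ?_⟩
    have hres : q0 ∘ sumMap (resf n k) ∈ hkCubes Gf (n + k) :=
      comp_mem hGf (resf n k) (resf_inj n k) hq0
    have hid : topHom G n k (fun v => (q0 v)⁻¹ * q1 v)
        = (q0 ∘ sumMap (resf n k))⁻¹ * arrowMap (k := k) q0 q1 := by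
      rw [arrow_decomp q0 q1]
      group
    have htop : topHom G n k (fun v => (q0 v)⁻¹ * q1 v) ∈ hkCubes Gf (n + k) := by
      rw [hid]
      exact mul_mem (inv_mem hres) h
    exact claim_ind k Gf hGf n _ htop
  · rintro ⟨h0, hd⟩
    have hres : q0 ∘ sumMap (resf n k) ∈ hkCubes Gf (n + k) :=
      comp_mem hGf (resf n k) (resf_inj n k) h0
    have htop : topHom G n k (fun v => (q0 v)⁻¹ * q1 v) ∈ hkCubes Gf (n + k) :=
      topHom_mem hGf hd
    rw [arrow_decomp q0 q1]
    exact mul_mem hres htop
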